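/- Every normal cone in the principal left ideal category L(OX_n) is a principal cone: if γ is a normal cone with vertex Se_A, then there exists an order-preserving transformation α ∈ OX_n with image A such that γ = ρ^α, where ρ^α(Se) = ρ(e, e·α, e_A) for each idempotent e. -/
import Mathlib


/-- The semigroup `OX_n` of order-preserving non-invertible transformations of
the chain `Fin n`, composed left to right. -/
def OX (n : ℕ) := {f : Fin n → Fin n // Monotone f ∧ ¬ Function.Surjective f}

instance (n : ℕ) : Mul (OX n) :=
  ⟨fun f g => ⟨g.1 ∘ f.1, g.2.1.comp f.2.1, fun h => g.2.2 h.of_comp⟩⟩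

/-- The principal left ideal `S e`. -/
def Lideal {n : ℕ} (e : OX n) : Set (OX n) := {x | ∃ s, x = s * e}

/-- Every normal cone in the principal left ideal category `L(OX_n)` is a
principal cone: a cone with vertex `S e_A` whose component at each `S e` is a
partial right translation compatible with inclusions, and having some bijective
component, must be of the form `ρ^α : x ↦ x α` for some `α ∈ OX_n` with
`Im α = Im e_A`. -/
theorem stmt10 (n : ℕ) (hn : 3 ≤ n) (eA : OX n) (heA : eA * eA = eA)
    (γ : ∀ e : OX n, e * e = e → OX n → OX n)
    (hwd : ∀ e f he hf, Lideal e = Lideal f → ∀ x ∈ Lideal e, γ e he x = γ f hf x)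
    (htrans : ∀ e he, ∃ u : OX n, e * u = u ∧ u * eA = u ∧
      ∀ x ∈ Lideal e, γ e he x = x * u)
    (hcompat : ∀ e f he hf, Lideal e ⊆ Lideal f → ∀ x ∈ Lideal e, γ f hf x = γ e he x)
    (hnormal : ∃ e he, Set.BijOn (γ e he) (Lideal e) (Lideal eA)) :
    ∃ α : OX n, Set.range α.1 = Set.range eA.1 ∧
      ∀ e he, ∀ x ∈ Lideal e, γ e he x = x * α := by
  classical
  choose u hu1 hu2 hu3 using htrans
  -- idempotents fix their range pointwise
  have hfix : ∀ (e : OX n), e * e = e → ∀ p ∈ Set.range e.1, e.1 p = p := by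
    rintro e he p ⟨q, rfl⟩
    exact congrFun (congrArg Subtype.val he) q
  -- membership in the principal left ideal
  have hmem : ∀ (e : OX n), e * e = e → ∀ x : OX n,
      (x ∈ Lideal e ↔ Set.range x.1 ⊆ Set.range e.1) := by
    intro e he x
    constructor
    · rintro ⟨s, rfl⟩
      rintro p ⟨q, hq⟩
      exact ⟨s.1 q, hq⟩
    · intro h
      exact ⟨x, Subtype.ext (funext fun i => (hfix e he _ (h ⟨i, rfl⟩)).symm)⟩
  -- constant maps are idempotents of OX n
  have cns : ∀ i : Fin n, ¬ Function.Surjective (fun _ : Fin n => i) := by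
    intro i h
    obtain ⟨a, ha⟩ := h ⟨0, by omega⟩
    obtain ⟨b, hb⟩ := h ⟨1, by omega⟩
    have h0 := congrArg Fin.val ha
    have h1 := congrArg Fin.val hb
    simp at h0 h1
    omega
  set c : Fin n → OX n := fun i => ⟨fun _ => i, monotone_const, cns i⟩ with hcdef
  have hc : ∀ i, c i * c i = c i := fun i => Subtype.ext rfl
  -- the key: u e agrees with u (c p) at every p in the range of e
  have hkey : ∀ (e : OX n) (he : e * e = e) (p : Fin n), p ∈ Set.range e.1 →
      (u e he).1 p = (u (c p) (hc p)).1 p := by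
    intro e he p hp
    have hsub : Lideal (c p) ⊆ Lideal e := by
      intro x hx
      rw [hmem (c p) (hc p) x] at hx
      rw [hmem e he x]
      intro q hq
      obtain ⟨a, rfl⟩ := hx hq
      exact hp
    have hcp : c p ∈ Lideal (c p) := ⟨c p, (hc p).symm⟩
    have h1 := hcompat (c p) e (hc p) he hsub (c p) hcp
    have h2 := hu3 e he (c p) (hsub hcp)
    have h3 := hu3 (c p) (hc p) (c p) hcp
    have h4 : c p * u e he = c p * u (c p) (hc p) := by rw [← h2, ← h3, h1]
    exact congrFun (congrArg Subtype.val h4) p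
  -- the candidate function
  set g : Fin n → Fin n := fun p => (u (c p) (hc p)).1 p with hgdef
  have hkey' : ∀ (e : OX n) (he : e * e = e), ∀ p ∈ Set.range e.1,
      (u e he).1 p = g p := fun e he p hp => hkey e he p hp
  -- range of g lands in range of eA
  have hgA : ∀ p, g p ∈ Set.range eA.1 := by
    intro p
    have h2 := congrFun (congrArg Subtype.val (hu2 (c p) (hc p))) p
    exact ⟨(u (c p) (hc p)).1 p, h2⟩
  -- monotone
  have hgm : Monotone g := by
    intro i j hij
    rcases eq_or_lt_of_le hij with rfl | hlt
    · exact le_refl _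
    · -- pair idempotent with range {i, j}
      have e2m : Monotone (fun x : Fin n => if x < j then i else j) := by
        intro x y hxy
        show (if x < j then i else j) ≤ (if y < j then i else j)
        by_cases hy : y < j
        · rw [if_pos (lt_of_le_of_lt hxy hy), if_pos hy]
        · rw [if_neg hy]
          split_ifs with hx
          · exact le_of_lt hlt
          · exact le_refl j
      have e2ns : ¬ Function.Surjective (fun x : Fin n => if x < j then i else j) := by
        intro h
        obtain ⟨a, ha⟩ := h ⟨0, by omega⟩
        obtain ⟨b, hb⟩ := h ⟨1, by omega⟩
        obtain ⟨d, hd⟩ := h ⟨2, by omega⟩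
        change (if a < j then i else j) = _ at ha
        change (if b < j then i else j) = _ at hb
        change (if d < j then i else j) = _ at hd
        have h0 : i.1 = 0 ∨ j.1 = 0 := by
          split_ifs at ha
          · exact Or.inl (by simpa using congrArg Fin.val ha)
          · exact Or.inr (by simpa using congrArg Fin.val ha)
        have h1 : i.1 = 1 ∨ j.1 = 1 := by
          split_ifs at hb
          · exact Or.inl (by simpa using congrArg Fin.val hb)
          · exact Or.inr (by simpa using congrArg Fin.val hb)
        have h2 : i.1 = 2 ∨ j.1 = 2 := by
          split_ifs at hd
          · exact Or.inl (by simpa using congrArg Fin.val hd)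
          · exact Or.inr (by simpa using congrArg Fin.val hd)
        omega
      set e2 : OX n := ⟨fun x => if x < j then i else j, e2m, e2ns⟩ with he2def
      have he2 : e2 * e2 = e2 := by
        apply Subtype.ext
        funext x
        show (if (if x < j then i else j) < j then i else j) = (if x < j then i else j)
        by_cases hx : x < j
        · rw [if_pos hx, if_pos hlt]
        · rw [if_neg hx, if_neg (lt_irrefl j)]
      have hi : i ∈ Set.range e2.1 := ⟨i, by simp [he2def, hlt]⟩
      have hj : j ∈ Set.range e2.1 := ⟨j, by simp [he2def]⟩
      calc g i = (u e2 he2).1 i := (hkey' e2 he2 i hi).symm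
        _ ≤ (u e2 he2).1 j := (u e2 he2).2.1 hij
        _ = g j := hkey' e2 he2 j hj
  -- not surjective
  have hgns : ¬ Function.Surjective g := by
    intro hs
    apply eA.2.2
    intro y
    obtain ⟨p, rfl⟩ := hs y
    exact hgA p
  refine ⟨⟨g, hgm, hgns⟩, ?_, ?_⟩
  · apply Set.eq_of_subset_of_subset
    · rintro q ⟨p, rfl⟩
      exact hgA p
    · -- use normality
      obtain ⟨e, he, hbij⟩ := hnormal
      have heAmem : eA ∈ Lideal eA := ⟨eA, heA.symm⟩
      obtain ⟨x, hx, hγx⟩ := hbij.surjOn heAmem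
      have hxe : Set.range x.1 ⊆ Set.range e.1 := (hmem e he x).1 hx
      have hxu : x * u e he = eA := by rw [← hu3 e he x hx, hγx]
      rintro q ⟨a, rfl⟩
      have : eA.1 a = (u e he).1 (x.1 a) := by
        rw [← hxu]; rfl
      rw [this, hkey' e he (x.1 a) (hxe ⟨a, rfl⟩)]
      exact ⟨x.1 a, rfl⟩
  · intro e he x hx
    rw [hu3 e he x hx]
    apply Subtype.ext
    funext a
    exact hkey' e he (x.1 a) ((hmem e he x).1 hx ⟨a, rfl⟩)
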